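/- KL-controlled suboptimality bound: in a finite discounted MDP with |r(s,a)| ≤ R_max for all (s,a), let π and π' be stationary policies such that π'(a|s) > 0 for all (s,a), and set Δ = max_{s∈S} D_KL(π(·|s) ‖ π'(·|s)). Then max_{s∈S} |V^π(s) − V^{π'}(s)| ≤ (2·R_max/(1−γ)²)·√(Δ/2); in particular, as the worst-case per-state KL divergence between the two policies tends to 0, the value gap between them tends to 0. -/

import Mathlib

lemma keyPointwise {x y : ℝ} (hx : 0 ≤ x) (hy : 0 < y) :
    3*(x-y)^2/(2*(x+2*y)) ≤ x * Real.log (x/y) - x + y := by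
  rcases eq_or_lt_of_le hx with h0 | hx
  · rw [← h0]
    simp only [zero_sub, zero_add, zero_div, Real.log_zero, mul_zero, zero_mul, sub_zero, zero_mul]
    rw [neg_sq, div_le_iff₀ (by positivity)]
    nlinarith
  · set F : ℝ → ℝ := fun t => t * Real.log t - t * Real.log y - t + y - 3*(t-y)^2/(2*(t+2*y)) with hFdef
    set G : ℝ → ℝ := fun t => Real.log t - Real.log y - 3*(t-y)*(t+5*y)/(2*(t+2*y)^2) with hGdef
    have hF : ∀ t : ℝ, 0 < t → HasDerivAt F (G t) t := by
      intro t ht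
      have h2y : (0:ℝ) < t + 2*y := by linarith
      have hnum : HasDerivAt (fun t : ℝ => 3*(t-y)^2) (3*(2*(t-y)^1*1)) t :=
        (((hasDerivAt_id t).sub_const y).pow 2).const_mul 3
      have hden : HasDerivAt (fun t : ℝ => 2*(t+2*y)) (2*1) t :=
        ((hasDerivAt_id t).add_const (2*y)).const_mul 2
      have hrat := hnum.div hden (by positivity)
      have h1 := Real.hasDerivAt_mul_log ht.ne'
      have h2 : HasDerivAt (fun t : ℝ => t * Real.log y) (Real.log y) t := by
        simpa using (hasDerivAt_id t).mul_const (Real.log y)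
      have := (((h1.sub h2).sub (hasDerivAt_id t)).add_const y).sub hrat
      refine this.congr_deriv ?_
      simp only [hGdef]
      field_simp
      ring
    have hG : ∀ t : ℝ, 0 < t → HasDerivAt G (1/t - 27*y^2/(t+2*y)^3) t := by
      intro t ht
      have h2y : (0:ℝ) < t + 2*y := by linarith
      have hnum : HasDerivAt (fun t : ℝ => 3*((t-y)*(t+5*y))) (3*(1*(t+5*y)+(t-y)*1)) t :=
        (((hasDerivAt_id t).sub_const y).mul ((hasDerivAt_id t).add_const (5*y))).const_mul 3
      have hden : HasDerivAt (fun t : ℝ => 2*(t+2*y)^2) (2*(2*(t+2*y)^1*1)) t :=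
        (((hasDerivAt_id t).add_const (2*y)).pow 2).const_mul 2
      have hrat := hnum.div hden (by positivity)
      have hlog := Real.hasDerivAt_log ht.ne'
      have := (hlog.sub_const (Real.log y)).sub hrat
      convert this using 1
      · rfl
      · rfl
      · funext u; simp only [hGdef, Pi.sub_apply, Pi.div_apply]; ring_nf
      · field_simp
        ring
    have hG0 : ∀ t : ℝ, 0 < t → 0 ≤ 1/t - 27*y^2/(t+2*y)^3 := by
      intro t ht
      have h2y : (0:ℝ) < t + 2*y := by linarith
      rw [sub_nonneg, div_le_div_iff₀ (by positivity) ht]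
      nlinarith [mul_nonneg (sq_nonneg (t-y)) (by linarith : (0:ℝ) ≤ t+8*y)]
    have hGmono : MonotoneOn G (Set.Ioi 0) := by
      apply monotoneOn_of_hasDerivWithinAt_nonneg (convex_Ioi 0)
        (fun t ht => ((hG t ht).continuousAt).continuousWithinAt)
        (f' := fun t => 1/t - 27*y^2/(t+2*y)^3)
      · intro t ht
        rw [interior_Ioi] at ht
        exact (hG t ht).hasDerivWithinAt
      · intro t ht
        rw [interior_Ioi] at ht
        exact hG0 t ht
    have hGy : G y = 0 := by
      simp only [hGdef, sub_self, zero_mul, mul_zero, zero_div, sub_zero]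
    have hFy : F y = 0 := by
      simp only [hFdef, sub_self]
      ring_nf
    have hFx : 0 ≤ F x := by
      rcases le_or_gt y x with hyx | hyx
      · have hmono : MonotoneOn F (Set.Icc y x) := by
          apply monotoneOn_of_hasDerivWithinAt_nonneg (convex_Icc y x)
            (fun t ht => ((hF t (lt_of_lt_of_le hy ht.1)).continuousAt).continuousWithinAt)
            (f' := G)
          · intro t ht
            have ht' := interior_subset ht
            exact (hF t (lt_of_lt_of_le hy ht'.1)).hasDerivWithinAt
          · intro t ht
            rw [interior_Icc] at ht
            rw [← hGy]
            exact hGmono (Set.mem_Ioi.2 hy) (Set.mem_Ioi.2 (lt_trans hy ht.1)) ht.1.le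
        have := hmono (Set.left_mem_Icc.2 hyx) (Set.right_mem_Icc.2 hyx) hyx
        linarith [hFy ▸ this]
      · have hanti : AntitoneOn F (Set.Icc x y) := by
          apply antitoneOn_of_hasDerivWithinAt_nonpos (convex_Icc x y)
            (fun t ht => ((hF t (lt_of_lt_of_le hx ht.1)).continuousAt).continuousWithinAt)
            (f' := G)
          · intro t ht
            have ht' := interior_subset ht
            exact (hF t (lt_of_lt_of_le hx ht'.1)).hasDerivWithinAt
          · intro t ht
            rw [interior_Icc] at ht
            rw [← hGy]
            exact hGmono (Set.mem_Ioi.2 (lt_trans hx ht.1)) (Set.mem_Ioi.2 hy) ht.2.le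
        have := hanti (Set.left_mem_Icc.2 hyx.le) (Set.right_mem_Icc.2 hyx.le) hyx.le
        linarith [hFy ▸ this]
    have hlogdiv : Real.log (x/y) = Real.log x - Real.log y := Real.log_div hx.ne' hy.ne'
    simp only [hFdef] at hFx
    rw [hlogdiv]
    nlinarith [hFx]

lemma pinskerFin {A : Type*} [Fintype A] (p q : A → ℝ)
    (hp0 : ∀ a, 0 ≤ p a) (hq0 : ∀ a, 0 < q a)
    (hp1 : ∑ a, p a = 1) (hq1 : ∑ a, q a = 1)
    (key : ∀ a : A, 3*(p a - q a)^2/(2*(p a + 2*q a)) ≤ p a * Real.log (p a / q a) - p a + q a) :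
    (∑ a, |p a - q a|)^2 ≤ 2 * ∑ a, p a * Real.log (p a / q a) := by
  set d : A → ℝ := fun a => 2*(p a + 2*q a)/3 with hd
  have hdpos : ∀ a, 0 < d a := fun a => by
    have h1 := hp0 a; have h2 := hq0 a
    simp only [hd]; positivity
  have hsumd : ∑ a, d a = 2 := by
    have : ∑ a, d a = (2 * ∑ a, p a + 4 * ∑ a, q a) / 3 := by
      rw [Finset.mul_sum, Finset.mul_sum, ← Finset.sum_add_distrib, ← Finset.sum_div]
      congr 1
      exact Finset.sum_congr rfl (fun a _ => by ring)
    rw [this, hp1, hq1]; norm_num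
  have hKL : ∑ a, (p a - q a)^2 / d a ≤ ∑ a, p a * Real.log (p a / q a) := by
    have h1 : ∑ a, (p a - q a)^2 / d a ≤ ∑ a, (p a * Real.log (p a / q a) - p a + q a) := by
      apply Finset.sum_le_sum
      intro a _
      have : (p a - q a)^2 / d a = 3*(p a - q a)^2/(2*(p a + 2*q a)) := by
        have h2 := hq0 a; have h3 := hp0 a
        simp only [hd]
        rw [div_div_eq_mul_div, div_eq_div_iff (by positivity) (by positivity)]
        ring
      rw [this]; exact key a
    have h2 : ∑ a, (p a * Real.log (p a / q a) - p a + q a)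
        = ∑ a, p a * Real.log (p a / q a) := by
      rw [Finset.sum_add_distrib, Finset.sum_sub_distrib, hp1, hq1]; ring
    linarith
  have hCS := Finset.sum_mul_sq_le_sq_mul_sq Finset.univ
      (fun a => |p a - q a| / Real.sqrt (d a)) (fun a => Real.sqrt (d a))
  have e1 : ∀ a : A, |p a - q a| / Real.sqrt (d a) * Real.sqrt (d a) = |p a - q a| :=
    fun a => div_mul_cancel₀ _ (Real.sqrt_ne_zero'.mpr (hdpos a))
  have e2 : ∀ a : A, (|p a - q a| / Real.sqrt (d a))^2 = (p a - q a)^2 / d a := fun a => by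
    rw [div_pow, sq_abs, Real.sq_sqrt (hdpos a).le]
  have e3 : ∀ a : A, (Real.sqrt (d a))^2 = d a := fun a => Real.sq_sqrt (hdpos a).le
  simp only [e1, e2, e3] at hCS
  rw [hsumd] at hCS
  nlinarith [hCS, hKL, Finset.sum_nonneg (fun a (_ : a ∈ Finset.univ) => div_nonneg (sq_nonneg (p a - q a)) (hdpos a).le)]




/-- The Bellman operator of a stationary policy `π` in a finite discounted MDP. -/
def Tpol {S A : Type*} [Fintype S] [Fintype A]
    (P : S → A → S → ℝ) (r : S → A → ℝ) (γ : ℝ) (π : S → A → ℝ)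
    (V : S → ℝ) : S → ℝ :=
  fun s => ∑ a, π s a * (r s a + γ * ∑ s', P s a s' * V s')

/-- KL-controlled suboptimality bound: with
`Δ = max_s D_KL(π(·|s) ‖ π'(·|s))`,
`max_s |V^π(s) − V^{π'}(s)| ≤ (2·R_max/(1−γ)²)·√(Δ/2)`. -/
theorem stmt15 {S A : Type*} [Fintype S] [Fintype A] [Nonempty S] [Nonempty A]
    (P : S → A → S → ℝ) (hP0 : ∀ s a s', 0 ≤ P s a s')
    (hP1 : ∀ s a, ∑ s', P s a s' = 1)
    (r : S → A → ℝ) (γ : ℝ) (hγ0 : 0 ≤ γ) (hγ1 : γ < 1)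
    (Rmax : ℝ) (hR : ∀ s a, |r s a| ≤ Rmax)
    (π : S → A → ℝ) (hπ0 : ∀ s a, 0 ≤ π s a) (hπ1 : ∀ s, ∑ a, π s a = 1)
    (π' : S → A → ℝ) (hπ'0 : ∀ s a, 0 < π' s a) (hπ'1 : ∀ s, ∑ a, π' s a = 1)
    (Vpi : S → ℝ) (hVpi : Tpol P r γ π Vpi = Vpi)
    (Vpi' : S → ℝ) (hVpi' : Tpol P r γ π' Vpi' = Vpi')
    (Δ : ℝ)
    (hΔ : Δ = Finset.univ.sup' Finset.univ_nonempty
      (fun s => ∑ a, π s a * Real.log (π s a / π' s a))) :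
    (Finset.univ.sup' Finset.univ_nonempty (fun s => |Vpi s - Vpi' s|))
      ≤ (2 * Rmax / (1 - γ) ^ 2) * Real.sqrt (Δ / 2) := by
  have h1γ : (0:ℝ) < 1 - γ := by linarith
  have hRm : 0 ≤ Rmax :=
    le_trans (abs_nonneg _) (hR (Classical.arbitrary S) (Classical.arbitrary A))
  -- Pinsker per state
  have pinsker : ∀ s : S, (∑ a, |π s a - π' s a|)^2
      ≤ 2 * ∑ a, π s a * Real.log (π s a / π' s a) :=
    fun s => pinskerFin (π s) (π' s) (hπ0 s) (hπ'0 s) (hπ1 s) (hπ'1 s)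
      (fun a => keyPointwise (hπ0 s a) (hπ'0 s a))
  have hKLΔ : ∀ s : S, ∑ a, π s a * Real.log (π s a / π' s a) ≤ Δ := fun s => by
    rw [hΔ]
    exact Finset.le_sup' (fun s => ∑ a, π s a * Real.log (π s a / π' s a)) (Finset.mem_univ s)
  have hΔ0 : 0 ≤ Δ := by
    have s0 := Classical.arbitrary S
    nlinarith [pinsker s0, hKLΔ s0, sq_nonneg (∑ a, |π s0 a - π' s0 a|)]
  have hL1 : ∀ s : S, ∑ a, |π s a - π' s a| ≤ Real.sqrt (2*Δ) := fun s => by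
    have hnn : 0 ≤ ∑ a, |π s a - π' s a| :=
      Finset.sum_nonneg fun a _ => abs_nonneg _
    rw [Real.le_sqrt hnn (by linarith)]
    nlinarith [pinsker s, hKLΔ s]
  -- transition averaging helper
  have hPV : ∀ (s : S) (a : A) (V : S → ℝ) (M : ℝ), (∀ s', |V s'| ≤ M) →
      |∑ s', P s a s' * V s'| ≤ M := by
    intro s a V M hV
    calc |∑ s', P s a s' * V s'| ≤ ∑ s', |P s a s' * V s'| :=
          Finset.abs_sum_le_sum_abs _ _
      _ ≤ ∑ s', P s a s' * M := Finset.sum_le_sum fun s' _ => by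
          rw [abs_mul, abs_of_nonneg (hP0 s a s')]
          exact mul_le_mul_of_nonneg_left (hV s') (hP0 s a s')
      _ = M := by rw [← Finset.sum_mul, hP1, one_mul]
  -- bound on ‖Vpi'‖∞
  set M' := Finset.univ.sup' Finset.univ_nonempty (fun s => |Vpi' s|) with hM'def
  have hM'le : ∀ s, |Vpi' s| ≤ M' := fun s => by
    rw [hM'def]; exact Finset.le_sup' (fun s => |Vpi' s|) (Finset.mem_univ s)
  have hM'bound : M' ≤ Rmax / (1-γ) := by
    have key : ∀ s, |Vpi' s| ≤ Rmax + γ * M' := by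
      intro s
      conv_lhs => rw [← hVpi']
      show |∑ a, π' s a * (r s a + γ * ∑ s', P s a s' * Vpi' s')| ≤ _
      calc |∑ a, π' s a * (r s a + γ * ∑ s', P s a s' * Vpi' s')|
          ≤ ∑ a, |π' s a * (r s a + γ * ∑ s', P s a s' * Vpi' s')| :=
            Finset.abs_sum_le_sum_abs _ _
        _ ≤ ∑ a, π' s a * (Rmax + γ * M') := by
            apply Finset.sum_le_sum
            intro a _
            rw [abs_mul, abs_of_nonneg (hπ'0 s a).le]
            apply mul_le_mul_of_nonneg_left _ (hπ'0 s a).le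
            calc |r s a + γ * ∑ s', P s a s' * Vpi' s'|
                ≤ |r s a| + γ * |∑ s', P s a s' * Vpi' s'| := by
                  refine le_trans (abs_add_le _ _) ?_
                  rw [abs_mul, abs_of_nonneg hγ0]
              _ ≤ Rmax + γ * M' := by
                  have := hPV s a Vpi' M' hM'le
                  have := hR s a
                  nlinarith
        _ = Rmax + γ * M' := by rw [← Finset.sum_mul, hπ'1, one_mul]
    have hs : M' ≤ Rmax + γ * M' := by
      rw [hM'def]; exact Finset.sup'_le _ _ fun s _ => key s
    rw [le_div_iff₀ h1γ]; nlinarith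
  -- main contraction estimate
  set M := Finset.univ.sup' Finset.univ_nonempty (fun s => |Vpi s - Vpi' s|) with hMdef
  have hMle : ∀ s, |Vpi s - Vpi' s| ≤ M := fun s => by
    rw [hMdef]; exact Finset.le_sup' (fun s => |Vpi s - Vpi' s|) (Finset.mem_univ s)
  have hK : ∀ s a, |r s a + γ * ∑ s', P s a s' * Vpi' s'| ≤ Rmax / (1-γ) := by
    intro s a
    have h1 : |∑ s', P s a s' * Vpi' s'| ≤ Rmax / (1-γ) :=
      le_trans (hPV s a Vpi' M' hM'le) hM'bound
    have h2 := hR s a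
    calc |r s a + γ * ∑ s', P s a s' * Vpi' s'|
        ≤ |r s a| + γ * |∑ s', P s a s' * Vpi' s'| := by
          refine le_trans (abs_add_le _ _) ?_
          rw [abs_mul, abs_of_nonneg hγ0]
      _ ≤ Rmax + γ * (Rmax / (1-γ)) := by nlinarith
      _ = Rmax / (1-γ) := by field_simp; ring
  have key : ∀ s, |Vpi s - Vpi' s| ≤ γ * M + (Rmax / (1-γ)) * Real.sqrt (2*Δ) := by
    intro s
    have split : Vpi s - Vpi' s
        = γ * (∑ a, π s a * (∑ s', P s a s' * (Vpi s' - Vpi' s')))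
          + ∑ a, (π s a - π' s a) * (r s a + γ * ∑ s', P s a s' * Vpi' s') := by
      conv_lhs => rw [← hVpi, ← hVpi']
      show (∑ a, π s a * (r s a + γ * ∑ s', P s a s' * Vpi s'))
          - (∑ a, π' s a * (r s a + γ * ∑ s', P s a s' * Vpi' s')) = _
      rw [Finset.mul_sum, ← Finset.sum_add_distrib, ← Finset.sum_sub_distrib]
      apply Finset.sum_congr rfl
      intro a _
      have e : ∑ s', P s a s' * (Vpi s' - Vpi' s')
          = (∑ s', P s a s' * Vpi s') - ∑ s', P s a s' * Vpi' s' := by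
        rw [← Finset.sum_sub_distrib]
        exact Finset.sum_congr rfl fun s' _ => by ring
      rw [e]; ring
    rw [split]
    have t1 : |γ * (∑ a, π s a * (∑ s', P s a s' * (Vpi s' - Vpi' s')))| ≤ γ * M := by
      rw [abs_mul, abs_of_nonneg hγ0]
      apply mul_le_mul_of_nonneg_left _ hγ0
      calc |∑ a, π s a * (∑ s', P s a s' * (Vpi s' - Vpi' s'))|
          ≤ ∑ a, |π s a * (∑ s', P s a s' * (Vpi s' - Vpi' s'))| :=
            Finset.abs_sum_le_sum_abs _ _
        _ ≤ ∑ a, π s a * M := by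
            apply Finset.sum_le_sum
            intro a _
            rw [abs_mul, abs_of_nonneg (hπ0 s a)]
            exact mul_le_mul_of_nonneg_left
              (hPV s a (fun s' => Vpi s' - Vpi' s') M fun s' => hMle s') (hπ0 s a)
        _ = M := by rw [← Finset.sum_mul, hπ1, one_mul]
    have t2 : |∑ a, (π s a - π' s a) * (r s a + γ * ∑ s', P s a s' * Vpi' s')|
        ≤ (Rmax / (1-γ)) * Real.sqrt (2*Δ) := by
      calc |∑ a, (π s a - π' s a) * (r s a + γ * ∑ s', P s a s' * Vpi' s')|
          ≤ ∑ a, |(π s a - π' s a) * (r s a + γ * ∑ s', P s a s' * Vpi' s')| :=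
            Finset.abs_sum_le_sum_abs _ _
        _ ≤ ∑ a, |π s a - π' s a| * (Rmax / (1-γ)) := by
            apply Finset.sum_le_sum
            intro a _
            rw [abs_mul]
            exact mul_le_mul_of_nonneg_left (hK s a) (abs_nonneg _)
        _ = (∑ a, |π s a - π' s a|) * (Rmax / (1-γ)) := by rw [← Finset.sum_mul]
        _ ≤ Real.sqrt (2*Δ) * (Rmax / (1-γ)) := by
            apply mul_le_mul_of_nonneg_right (hL1 s)
            positivity
        _ = (Rmax / (1-γ)) * Real.sqrt (2*Δ) := by ring
    calc |γ * (∑ a, π s a * (∑ s', P s a s' * (Vpi s' - Vpi' s')))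
          + ∑ a, (π s a - π' s a) * (r s a + γ * ∑ s', P s a s' * Vpi' s')|
        ≤ |γ * (∑ a, π s a * (∑ s', P s a s' * (Vpi s' - Vpi' s')))|
          + |∑ a, (π s a - π' s a) * (r s a + γ * ∑ s', P s a s' * Vpi' s')| := abs_add_le _ _
      _ ≤ γ * M + (Rmax / (1-γ)) * Real.sqrt (2*Δ) := add_le_add t1 t2
  have hM : M ≤ γ * M + (Rmax / (1-γ)) * Real.sqrt (2*Δ) := by
    rw [hMdef]; exact Finset.sup'_le _ _ fun s _ => key s
  have hsqrt : Real.sqrt (2*Δ) = 2 * Real.sqrt (Δ/2) := by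
    rw [show (2*Δ : ℝ) = 2^2 * (Δ/2) by ring, Real.sqrt_mul (by positivity) (Δ/2),
      Real.sqrt_sq (by norm_num : (0:ℝ) ≤ 2)]
  have h2 : (1-γ) * M ≤ (Rmax / (1-γ)) * Real.sqrt (2*Δ) := by nlinarith
  rw [show (2 * Rmax / (1 - γ) ^ 2) * Real.sqrt (Δ / 2)
      = ((Rmax / (1-γ)) * Real.sqrt (2*Δ)) / (1-γ) by rw [hsqrt]; field_simp]
  rw [le_div_iff₀ h1γ]
  nlinarith
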